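/- arXiv:2605.21638 — 3 statements merged into one kernel-verified Lean document; each statement's English description precedes it below -/
import Mathlib

section
/- Let (X_n) be a real-valued stochastic process with X_0 = 0 and let τ be an ℕ-valued random variable such that P(τ = n) ≤ C e^{−β n} for all n and some constants C, β > 0, and suppose the limsup growth rate α(δ) := limsup_{n→∞} (1/n) log E[e^{δ X_n}] is finite for all δ in a neighborhood of 0 with α continuous at 0 and α(0)=0. Then there exists δ > 0 such that E[e^{δ X_τ}] < ∞. -/
open MeasureTheory Filter
open scoped ENNReal

/-- If the regeneration time τ has an exponentially decaying distribution and the growth rate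
α(δ) = limsup (1/n) log E[e^{δ X_n}] is finite near 0 and continuous at 0 with α(0) = 0,
then X_τ has a finite exponential moment. -/
theorem stmt1 {Ω : Type*} [MeasurableSpace Ω] (μ : Measure Ω) [IsProbabilityMeasure μ]
    (X : ℕ → Ω → ℝ) (hXm : ∀ n, Measurable (X n)) (hX0 : ∀ ω, X 0 ω = 0)
    (τ : Ω → ℕ) (hτm : Measurable τ)
    (C β : ℝ) (hC : 0 < C) (hβ : 0 < β)
    (hτtail : ∀ n : ℕ, μ {ω | τ ω = n} ≤ ENNReal.ofReal (C * Real.exp (-β * n)))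
    (α : ℝ → ℝ) (ε : ℝ) (hε : 0 < ε)
    (hfin : ∀ δ ∈ Set.Ioo (-ε) ε, ∀ n : ℕ,
      ∫⁻ ω, ENNReal.ofReal (Real.exp (δ * X n ω)) ∂μ < ⊤)
    (hαdef : ∀ δ ∈ Set.Ioo (-ε) ε,
      α δ = limsup (fun n : ℕ =>
        Real.log ((∫⁻ ω, ENNReal.ofReal (Real.exp (δ * X n ω)) ∂μ).toReal) / n) atTop)
    (hbdd : ∀ δ ∈ Set.Ioo (-ε) ε, IsBoundedUnder (· ≤ ·) atTop
      (fun n : ℕ =>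
        Real.log ((∫⁻ ω, ENNReal.ofReal (Real.exp (δ * X n ω)) ∂μ).toReal) / n))
    (hα0 : α 0 = 0) (hαcont : ContinuousAt α 0) :
    ∃ δ > 0, ∫⁻ ω, ENNReal.ofReal (Real.exp (δ * X (τ ω) ω)) ∂μ < ⊤ := by
  classical
  have hβ4 : 0 < β / 4 := by linarith
  obtain ⟨δ1, hδ1pos, hδ1⟩ := Metric.continuousAt_iff.mp hαcont (β / 4) hβ4
  set δ : ℝ := min δ1 ε / 4 with hδdef
  have hmin : 0 < min δ1 ε := lt_min hδ1pos hε
  have hδpos : 0 < δ := by positivity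
  have hminε : min δ1 ε ≤ ε := min_le_right _ _
  have hminδ1 : min δ1 ε ≤ δ1 := min_le_left _ _
  have hδε : δ < ε := by rw [hδdef]; linarith
  have h2δε : 2 * δ < ε := by rw [hδdef]; linarith
  have h2δδ1 : 2 * δ < δ1 := by rw [hδdef]; linarith
  have hδmem : δ ∈ Set.Ioo (-ε) ε := ⟨by linarith, hδε⟩
  have htmem : (2 * δ) ∈ Set.Ioo (-ε) ε := ⟨by linarith, h2δε⟩
  -- α (2δ) < β/4
  have hα2δ : α (2 * δ) < β / 4 := by
    have hd : dist (2 * δ) 0 < δ1 := by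
      rw [Real.dist_eq, sub_zero, abs_of_pos (by linarith)]
      exact h2δδ1
    have h := hδ1 hd
    rw [hα0, Real.dist_eq, sub_zero] at h
    exact lt_of_le_of_lt (le_abs_self _) h
  -- the moment generating functions
  set M : ℕ → ℝ≥0∞ := fun n => ∫⁻ ω, ENNReal.ofReal (Real.exp ((2 * δ) * X n ω)) ∂μ with hM
  have hMmeas : ∀ n, Measurable fun ω => ENNReal.ofReal (Real.exp ((2 * δ) * X n ω)) := fun n =>
    ENNReal.measurable_ofReal.comp (Real.measurable_exp.comp ((hXm n).const_mul _))
  have hMfin : ∀ n, M n < ⊤ := fun n => hfin _ htmem n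
  have hMpos : ∀ n, 0 < M n := by
    intro n
    rw [hM, lintegral_pos_iff_support (hMmeas n)]
    have hsupp : (Function.support fun ω => ENNReal.ofReal (Real.exp ((2 * δ) * X n ω)))
        = Set.univ := by
      ext ω
      simp [Function.mem_support, (ENNReal.ofReal_pos.mpr (Real.exp_pos _)).ne']
    rw [hsupp]
    simp
  -- eventual bound on M n
  have hlimsup : limsup (fun n : ℕ =>
      Real.log ((∫⁻ ω, ENNReal.ofReal (Real.exp ((2 * δ) * X n ω)) ∂μ).toReal) / n) atTop
      < β / 2 := by
    rw [← hαdef _ htmem]; linarith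
  have hev := eventually_lt_of_limsup_lt hlimsup (hbdd _ htmem)
  obtain ⟨N, hN⟩ := eventually_atTop.mp hev
  set N' : ℕ := max N 1 with hN'
  have hMbound : ∀ n : ℕ, N' ≤ n → M n ≤ ENNReal.ofReal (Real.exp (β / 2 * n)) := by
    intro n hn
    have hn1 : (1 : ℕ) ≤ n := le_trans (le_max_right _ _) hn
    have hnpos : (0 : ℝ) < n := by exact_mod_cast hn1
    have hMt : 0 < (M n).toReal := ENNReal.toReal_pos (hMpos n).ne' (hMfin n).ne
    have hlog := hN n (le_trans (le_max_left _ _) hn)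
    have hlog' : Real.log ((M n).toReal) < β / 2 * n := by
      rw [div_lt_iff₀ hnpos] at hlog
      linarith [hlog]
    have hlt : (M n).toReal < Real.exp (β / 2 * n) := by
      calc (M n).toReal = Real.exp (Real.log ((M n).toReal)) := (Real.exp_log hMt).symm
        _ < Real.exp (β / 2 * n) := Real.exp_lt_exp.mpr hlog'
    calc M n = ENNReal.ofReal ((M n).toReal) := (ENNReal.ofReal_toReal (hMfin n).ne).symm
      _ ≤ ENNReal.ofReal (Real.exp (β / 2 * n)) := ENNReal.ofReal_le_ofReal hlt.le
  -- decompose the integral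
  set f : ℕ → Ω → ℝ≥0∞ := fun n ω => ENNReal.ofReal (Real.exp (δ * X n ω)) with hf
  have hfmeas : ∀ n, Measurable (f n) := fun n =>
    ENNReal.measurable_ofReal.comp (Real.measurable_exp.comp ((hXm n).const_mul _))
  set g : ℕ → Ω → ℝ≥0∞ := fun n => Set.indicator {ω | τ ω = n} (f n) with hg
  have hsmeas : ∀ n : ℕ, MeasurableSet {ω | τ ω = n} := fun n =>
    hτm (measurableSet_singleton n)
  have hgmeas : ∀ n, Measurable (g n) := fun n => (hfmeas n).indicator (hsmeas n)
  have hpt : ∀ ω, ENNReal.ofReal (Real.exp (δ * X (τ ω) ω)) = ∑' n, g n ω := by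
    intro ω
    have hz : ∀ n : ℕ, n ≠ τ ω → g n ω = 0 := by
      intro n hn
      exact Set.indicator_of_notMem (fun h => hn ((Set.mem_setOf_eq ▸ h).symm)) _
    calc ENNReal.ofReal (Real.exp (δ * X (τ ω) ω)) = g (τ ω) ω :=
          (Set.indicator_of_mem (show ω ∈ {ω' | τ ω' = τ ω} from rfl) (f (τ ω))).symm
      _ = ∑' n, g n ω := (tsum_eq_single (τ ω) hz).symm
  refine ⟨δ, hδpos, ?_⟩
  have hrw : ∫⁻ ω, ENNReal.ofReal (Real.exp (δ * X (τ ω) ω)) ∂μ = ∑' n, ∫⁻ ω, g n ω ∂μ := by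
    rw [lintegral_congr hpt, lintegral_tsum fun n => (hgmeas n).aemeasurable]
  rw [hrw]
  -- Cauchy-Schwarz (Hölder with p = q = 2)
  have hHolder : ∀ n : ℕ, ∫⁻ ω, g n ω ∂μ ≤
      (M n) ^ (1 / 2 : ℝ) * (μ {ω | τ ω = n}) ^ (1 / 2 : ℝ) := by
    intro n
    set ind : Ω → ℝ≥0∞ := Set.indicator {ω | τ ω = n} (fun _ => 1) with hind
    have hindmeas : Measurable ind := measurable_one.indicator (hsmeas n)
    have hpq : Real.HolderConjugate 2 2 := Real.HolderConjugate.two_two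
    have hgfi : g n = f n * ind := by
      ext ω
      by_cases hω : ω ∈ {ω | τ ω = n}
      · simp [hg, hind, Set.indicator_of_mem hω]
      · simp [hg, hind, Set.indicator_of_notMem hω]
    have h := ENNReal.lintegral_mul_le_Lp_mul_Lq μ hpq
      (hfmeas n).aemeasurable hindmeas.aemeasurable
    rw [← hgfi] at h
    have h1 : ∫⁻ ω, f n ω ^ (2 : ℝ) ∂μ = M n := by
      apply lintegral_congr
      intro ω
      rw [hf, ENNReal.ofReal_rpow_of_pos (Real.exp_pos _),
        Real.rpow_def_of_pos (Real.exp_pos _), Real.log_exp]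
      ring_nf
    have h2 : ∫⁻ ω, ind ω ^ (2 : ℝ) ∂μ = μ {ω | τ ω = n} := by
      have : ∀ ω, ind ω ^ (2 : ℝ) = ind ω := by
        intro ω
        by_cases hω : ω ∈ {ω | τ ω = n}
        · simp [hind, Set.indicator_of_mem hω]
        · simp [hind, Set.indicator_of_notMem hω,
            ENNReal.zero_rpow_of_pos (by norm_num : (0:ℝ) < 2)]
      rw [lintegral_congr this, hind]
      exact lintegral_indicator_one (μ := μ) (hsmeas n)
    rw [h1, h2] at h
    exact h
  -- bound each integral for n ≥ N'
  have htail : ∀ n : ℕ, N' ≤ n → ∫⁻ ω, g n ω ∂μ ≤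
      ENNReal.ofReal (Real.sqrt C) * ENNReal.ofReal (Real.exp (-(β / 4))) ^ n := by
    intro n hn
    have h1 : (M n) ^ (1 / 2 : ℝ) ≤ ENNReal.ofReal (Real.exp (β / 4 * n)) := by
      calc (M n) ^ (1 / 2 : ℝ)
          ≤ (ENNReal.ofReal (Real.exp (β / 2 * n))) ^ (1 / 2 : ℝ) :=
            ENNReal.rpow_le_rpow (hMbound n hn) (by norm_num)
        _ = ENNReal.ofReal (Real.exp (β / 4 * n)) := by
            rw [ENNReal.ofReal_rpow_of_pos (Real.exp_pos _),
              Real.rpow_def_of_pos (Real.exp_pos _), Real.log_exp]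
            ring_nf
    have h2 : (μ {ω | τ ω = n}) ^ (1 / 2 : ℝ) ≤
        ENNReal.ofReal (Real.sqrt C * Real.exp (-(β / 2) * n)) := by
      calc (μ {ω | τ ω = n}) ^ (1 / 2 : ℝ)
          ≤ (ENNReal.ofReal (C * Real.exp (-β * n))) ^ (1 / 2 : ℝ) :=
            ENNReal.rpow_le_rpow (hτtail n) (by norm_num)
        _ = ENNReal.ofReal (Real.sqrt C * Real.exp (-(β / 2) * n)) := by
            rw [ENNReal.ofReal_rpow_of_pos (by positivity),
              Real.mul_rpow hC.le (Real.exp_pos _).le,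
              Real.rpow_def_of_pos (Real.exp_pos _), Real.log_exp,
              ← Real.sqrt_eq_rpow]
            ring_nf
    calc ∫⁻ ω, g n ω ∂μ ≤ (M n) ^ (1 / 2 : ℝ) * (μ {ω | τ ω = n}) ^ (1 / 2 : ℝ) := hHolder n
      _ ≤ ENNReal.ofReal (Real.exp (β / 4 * n)) *
          ENNReal.ofReal (Real.sqrt C * Real.exp (-(β / 2) * n)) := mul_le_mul' h1 h2
      _ = ENNReal.ofReal (Real.sqrt C) * ENNReal.ofReal (Real.exp (-(β / 4))) ^ n := by
          rw [← ENNReal.ofReal_mul (Real.exp_pos _).le,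
            ← ENNReal.ofReal_pow (Real.exp_pos _).le, ← Real.exp_nat_mul,
            ← ENNReal.ofReal_mul (Real.sqrt_nonneg _)]
          congr 1
          rw [mul_left_comm, ← Real.exp_add]
          congr 1
          ring
  -- each integral is finite
  have hgfin : ∀ n : ℕ, ∫⁻ ω, g n ω ∂μ < ⊤ := fun n =>
    lt_of_le_of_lt (lintegral_mono (fun ω => Set.indicator_le_self _ _ ω)) (hfin _ hδmem n)
  -- sum the bounds
  have hsum : ∑' n, ∫⁻ ω, g n ω ∂μ ≤
      (∑' n : ℕ, (if n < N' then ∫⁻ ω, g n ω ∂μ else 0)) +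
      (∑' n : ℕ, ENNReal.ofReal (Real.sqrt C) * ENNReal.ofReal (Real.exp (-(β / 4))) ^ n) := by
    rw [← ENNReal.tsum_add]
    apply ENNReal.tsum_le_tsum
    intro n
    by_cases hn : n < N'
    · simp only [hn, if_true]
      exact le_add_right le_rfl
    · simp only [hn, if_false, zero_add]
      exact htail n (le_of_not_gt hn)
  have hfinite1 : (∑' n : ℕ, (if n < N' then ∫⁻ ω, g n ω ∂μ else 0)) < ⊤ := by
    rw [tsum_eq_sum (s := Finset.range N') (fun n hn => by
      simp [Finset.mem_range.not.mp hn])]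
    apply ENNReal.sum_lt_top.mpr
    intro n hn
    simp only [Finset.mem_range] at hn
    simpa [hn] using hgfin n
  have hfinite2 : (∑' n : ℕ, ENNReal.ofReal (Real.sqrt C) *
      ENNReal.ofReal (Real.exp (-(β / 4))) ^ n) < ⊤ := by
    rw [ENNReal.tsum_mul_left, ENNReal.tsum_geometric]
    apply ENNReal.mul_lt_top ENNReal.ofReal_lt_top
    rw [ENNReal.inv_lt_top]
    rw [tsub_pos_iff_lt]
    exact ENNReal.ofReal_lt_one.mpr (Real.exp_lt_one_iff.mpr (by linarith))
  exact lt_of_le_of_lt hsum (ENNReal.add_lt_top.mpr ⟨hfinite1, hfinite2⟩)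
end

section
/- Let (X_n)_{n≥0} be a real-valued process with X_0 = 0 such that for some ε > 0 the growth rate α(ε) := limsup_n (1/n) log E[e^{ε X_n}] is finite and α(ε) → 0 as ε ↓ 0, and let τ be an ℕ-valued random variable with P(τ > n) ≤ C e^{−β n} for constants C, β > 0. Then the function h(t) := Σ_{n=0}^∞ P(X_n ∈ [t−q, t], τ > n) satisfies h(t) = O(e^{−δ t}) as t → ∞ for some δ > 0, for every fixed q > 0. -/
open MeasureTheory Filter

/-- If τ has exponential tails and the exponential growth rate α(ε) of E[e^{ε X_n}] is finite
for small ε > 0 with α(ε) → 0 as ε ↓ 0, then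
h(t) = Σ_n P(X_n ∈ [t−q,t], τ > n) decays exponentially as t → ∞, for every fixed q > 0. -/
theorem stmt2 {Ω : Type*} [MeasurableSpace Ω] (μ : Measure Ω) [IsProbabilityMeasure μ]
    (X : ℕ → Ω → ℝ) (hXm : ∀ n, Measurable (X n)) (hX0 : ∀ ω, X 0 ω = 0)
    (τ : Ω → ℕ) (hτm : Measurable τ)
    (C β : ℝ) (hC : 0 < C) (hβ : 0 < β)
    (hτtail : ∀ n : ℕ, μ {ω | n < τ ω} ≤ ENNReal.ofReal (C * Real.exp (-β * n)))
    (α : ℝ → ℝ) (ε₁ : ℝ) (hε₁ : 0 < ε₁)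
    (hfin : ∀ ε ∈ Set.Ioo (0 : ℝ) ε₁, ∀ n : ℕ,
      ∫⁻ ω, ENNReal.ofReal (Real.exp (ε * X n ω)) ∂μ < ⊤)
    (hαdef : ∀ ε ∈ Set.Ioo (0 : ℝ) ε₁,
      α ε = limsup (fun n : ℕ =>
        Real.log ((∫⁻ ω, ENNReal.ofReal (Real.exp (ε * X n ω)) ∂μ).toReal) / n) atTop)
    (hbdd : ∀ ε ∈ Set.Ioo (0 : ℝ) ε₁, IsBoundedUnder (· ≤ ·) atTop
      (fun n : ℕ =>
        Real.log ((∫⁻ ω, ENNReal.ofReal (Real.exp (ε * X n ω)) ∂μ).toReal) / n))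
    (hα0 : Tendsto α (nhdsWithin 0 (Set.Ioi 0)) (nhds 0))
    (q : ℝ) (hq : 0 < q) :
    ∃ δ > 0, ∃ C' T : ℝ, ∀ t ≥ T,
      (∑' n : ℕ, μ {ω | X n ω ∈ Set.Icc (t - q) t ∧ n < τ ω})
        ≤ ENNReal.ofReal (C' * Real.exp (-δ * t)) := by
  -- Step 1: choose ε with |α ε| < β/8
  have h8 : (0:ℝ) < β/8 := by positivity
  have hev : ∀ᶠ ε in nhdsWithin 0 (Set.Ioi 0), |α ε| < β/8 := by
    have := hα0.eventually (eventually_abs_sub_lt 0 h8)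
    simpa using this
  have hev2 : ∀ᶠ ε in nhdsWithin 0 (Set.Ioi 0), ε ∈ Set.Ioo (0:ℝ) ε₁ :=
    eventually_of_mem (Ioo_mem_nhdsGT_of_mem ⟨le_refl 0, hε₁⟩) (fun x hx => hx)
  obtain ⟨ε, hεmem, hεα⟩ := (hev2.and hev).exists
  have hε : 0 < ε := hεmem.1
  set γ : ℝ := α ε + β/8 with hγdef
  have hγpos : 0 < γ := by rw [hγdef]; have := abs_lt.1 hεα; linarith [this.1]
  have hγβ : γ < β/2 := by rw [hγdef]; have := abs_lt.1 hεα; linarith [this.2]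
  set I : ℕ → ENNReal := fun n => ∫⁻ ω, ENNReal.ofReal (Real.exp (ε * X n ω)) ∂μ with hIdef
  -- Step 2: eventually log (I n).toReal / n < γ
  have hls : limsup (fun n : ℕ => Real.log ((I n).toReal) / n) atTop < γ := by
    rw [← hαdef ε hεmem, hγdef]; have := abs_lt.1 hεα; linarith [this.2]
  have hevN : ∀ᶠ n : ℕ in atTop, Real.log ((I n).toReal) / n < γ :=
    eventually_lt_of_limsup_lt hls (hbdd ε hεmem)
  obtain ⟨N, hN⟩ := eventually_atTop.1 hevN
  -- Step 3: uniform bound I n ≤ ofReal (M * exp (γ n))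
  set M : ℝ := 1 + ∑ n ∈ Finset.range (N+1), (I n).toReal with hMdef
  have hM1 : (1:ℝ) ≤ M := by
    have : 0 ≤ ∑ n ∈ Finset.range (N+1), (I n).toReal :=
      Finset.sum_nonneg fun n _ => ENNReal.toReal_nonneg
    linarith
  have hMpos : 0 < M := lt_of_lt_of_le one_pos hM1
  have hIb : ∀ n : ℕ, I n ≤ ENNReal.ofReal (M * Real.exp (γ * n)) := by
    intro n
    have hfinn : I n ≠ ⊤ := (hfin ε hεmem n).ne
    have h1exp : (1:ℝ) ≤ Real.exp (γ * n) := by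
      rw [Real.one_le_exp_iff]; positivity
    rcases le_or_gt n N with hn | hn
    · have hle : (I n).toReal ≤ M := by
        have : (I n).toReal ≤ ∑ k ∈ Finset.range (N+1), (I k).toReal :=
          Finset.single_le_sum (f := fun k => (I k).toReal)
            (fun k _ => ENNReal.toReal_nonneg) (Finset.mem_range.2 (Nat.lt_succ_of_le hn))
        linarith
      calc I n = ENNReal.ofReal ((I n).toReal) := (ENNReal.ofReal_toReal hfinn).symm
        _ ≤ ENNReal.ofReal (M * Real.exp (γ * n)) := by
            apply ENNReal.ofReal_le_ofReal
            nlinarith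
    · have hnpos : (0:ℝ) < n := by exact_mod_cast Nat.lt_of_le_of_lt (Nat.zero_le N) hn
      have := hN n hn.le
      have hlog : Real.log ((I n).toReal) < γ * n := by
        rw [div_lt_iff₀ hnpos] at this; linarith
      have hle : (I n).toReal ≤ M * Real.exp (γ * n) := by
        rcases le_or_gt ((I n).toReal) 0 with h0 | h0
        · nlinarith [Real.exp_pos (γ * n)]
        · have : (I n).toReal < Real.exp (γ * n) := by
            rw [← Real.exp_log h0]; exact Real.exp_lt_exp.2 hlog
          nlinarith
      calc I n = ENNReal.ofReal ((I n).toReal) := (ENNReal.ofReal_toReal hfinn).symm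
        _ ≤ ENNReal.ofReal (M * Real.exp (γ * n)) := ENNReal.ofReal_le_ofReal hle
  -- Step 4: Chernoff
  have hcher : ∀ (n : ℕ) (t : ℝ),
      μ {ω | t - q ≤ X n ω} ≤ ENNReal.ofReal (M * Real.exp (γ * n) * Real.exp (-(ε * (t - q)))) := by
    intro n t
    set a : ENNReal := ENNReal.ofReal (Real.exp (ε * (t - q))) with hadef
    have ha0 : a ≠ 0 := by
      simp [hadef, ENNReal.ofReal_eq_zero, not_le, Real.exp_pos]
    have haT : a ≠ ⊤ := ENNReal.ofReal_ne_top
    have hset : {ω | t - q ≤ X n ω} = {ω | a ≤ ENNReal.ofReal (Real.exp (ε * X n ω))} := by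
      ext ω
      simp only [Set.mem_setOf_eq, hadef,
        ENNReal.ofReal_le_ofReal_iff (Real.exp_pos _).le, Real.exp_le_exp]
      exact (mul_le_mul_iff_right₀ hε).symm
    have hmeas : Measurable fun ω => ENNReal.ofReal (Real.exp (ε * X n ω)) :=
      (ENNReal.measurable_ofReal.comp (Real.measurable_exp.comp ((hXm n).const_mul ε)))
    have hkey : a * μ {ω | t - q ≤ X n ω} ≤ I n := by
      rw [hset]; exact mul_meas_ge_le_lintegral hmeas a
    have h2 : μ {ω | t - q ≤ X n ω} ≤ I n / a :=
      (ENNReal.le_div_iff_mul_le (Or.inl ha0) (Or.inl haT)).2 (by rwa [mul_comm] at hkey)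
    calc μ {ω | t - q ≤ X n ω} ≤ I n / a := h2
      _ ≤ ENNReal.ofReal (M * Real.exp (γ * n)) / a := ENNReal.div_le_div_right (hIb n) a
      _ = ENNReal.ofReal (M * Real.exp (γ * n) * Real.exp (-(ε * (t - q)))) := by
          rw [div_eq_mul_inv, hadef, ← ENNReal.ofReal_inv_of_pos (Real.exp_pos _),
            ← Real.exp_neg, ← ENNReal.ofReal_mul (by positivity)]
  -- Step 5: combined per-n bound
  set r : ℝ := Real.exp ((γ - β)/2) with hrdef
  set K : ℝ := Real.sqrt (M*C) * Real.exp (ε*q/2) with hKdef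
  have hmain : ∀ (n : ℕ) (t : ℝ),
      μ {ω | X n ω ∈ Set.Icc (t - q) t ∧ n < τ ω}
        ≤ ENNReal.ofReal (K * Real.exp (-(ε/2) * t)) * ENNReal.ofReal r ^ n := by
    intro n t
    set A : Set Ω := {ω | X n ω ∈ Set.Icc (t - q) t ∧ n < τ ω} with hAdef
    set b1 : ℝ := M * Real.exp (γ * n) * Real.exp (-(ε * (t - q))) with hb1def
    set b2 : ℝ := C * Real.exp (-β * n) with hb2def
    have hb1 : 0 ≤ b1 := by rw [hb1def]; positivity
    have hb2 : 0 ≤ b2 := by rw [hb2def]; positivity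
    have hA1 : μ A ≤ ENNReal.ofReal b1 :=
      le_trans (μ.mono fun ω h => h.1.1) (hcher n t)
    have hA2 : μ A ≤ ENNReal.ofReal b2 :=
      le_trans (μ.mono fun ω h => h.2) (hτtail n)
    have hmin : μ A ≤ ENNReal.ofReal (min b1 b2) := by
      rcases le_total b1 b2 with h | h
      · rwa [min_eq_left h]
      · rwa [min_eq_right h]
    have hsq : min b1 b2 ≤ Real.sqrt (b1 * b2) := by
      apply Real.le_sqrt_of_sq_le
      have h1 : min b1 b2 ≤ b1 := min_le_left _ _
      have h2 : min b1 b2 ≤ b2 := min_le_right _ _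
      have h0 : 0 ≤ min b1 b2 := le_min hb1 hb2
      nlinarith
    have heq : Real.sqrt (b1 * b2) = K * Real.exp (-(ε/2) * t) * r ^ n := by
      have hb : b1 * b2 = (M*C) * Real.exp (γ * n + (-(ε * (t - q))) + (-β * n)) := by
        rw [hb1def, hb2def, Real.exp_add, Real.exp_add]; ring
      rw [hb, Real.sqrt_mul (by positivity), ← Real.exp_half, hKdef, hrdef,
        ← Real.exp_nat_mul]
      have hexp : Real.exp (ε*q/2) * Real.exp (-(ε/2)*t) * Real.exp ((n:ℝ) * ((γ-β)/2))
          = Real.exp ((γ * n + -(ε * (t - q)) + -β * n)/2) := by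
        rw [← Real.exp_add, ← Real.exp_add]
        congr 1
        ring
      rw [← hexp]
      ring
    calc μ A ≤ ENNReal.ofReal (min b1 b2) := hmin
      _ ≤ ENNReal.ofReal (Real.sqrt (b1 * b2)) := ENNReal.ofReal_le_ofReal hsq
      _ = ENNReal.ofReal (K * Real.exp (-(ε/2) * t) * r ^ n) := by rw [heq]
      _ = ENNReal.ofReal (K * Real.exp (-(ε/2) * t)) * ENNReal.ofReal r ^ n := by
          rw [ENNReal.ofReal_mul (by positivity), ENNReal.ofReal_pow (Real.exp_pos _).le]
  -- Step 6: sum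
  have hr1 : r < 1 := by
    rw [hrdef, Real.exp_lt_one_iff]; linarith
  have hr0 : 0 < r := Real.exp_pos _
  have h1r : 0 < 1 - r := by linarith
  refine ⟨ε/2, by positivity, K * (1 - r)⁻¹, 0, fun t _ => ?_⟩
  calc (∑' n : ℕ, μ {ω | X n ω ∈ Set.Icc (t - q) t ∧ n < τ ω})
      ≤ ∑' n : ℕ, ENNReal.ofReal (K * Real.exp (-(ε/2) * t)) * ENNReal.ofReal r ^ n :=
        ENNReal.tsum_le_tsum fun n => hmain n t
    _ = ENNReal.ofReal (K * Real.exp (-(ε/2) * t)) * (1 - ENNReal.ofReal r)⁻¹ := by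
        rw [ENNReal.tsum_mul_left, ENNReal.tsum_geometric]
    _ = ENNReal.ofReal (K * (1 - r)⁻¹ * Real.exp (-(ε/2) * t)) := by
        rw [show (1 : ENNReal) - ENNReal.ofReal r = ENNReal.ofReal (1 - r) by
              rw [ENNReal.ofReal_sub _ hr0.le, ENNReal.ofReal_one],
          ← ENNReal.ofReal_inv_of_pos h1r, ← ENNReal.ofReal_mul (by positivity)]
        congr 1
        ring
end

section
/- Let K : (r_hc, ∞)^k × (r_hc, ∞)^k → ℝ be given by K(z, z') = exp(−β(½V_p(z) + W(z;z') + ½V_p(z'))) where V_p(z) = Σ_{1≤i<j≤k+1} v(z_i+⋯+z_{j−1}) + p Σ z_i and W(z;z') = Σ_{i,j} v(z_i+⋯+z_k+z'_1+⋯+z'_j), with v : ℝ₊ → ℝ ∪ {∞} bounded from below, finite on (r_hc, ∞), p > 0, β > 0. Then K(x,y) = K(s(y), s(x)) where s reverses coordinates, K is strictly positive on (r_hc,∞)^{2k}, and the integral operator with kernel K is Hilbert–Schmidt (hence compact) on L²((r_hc,∞)^k). -/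
open MeasureTheory
open scoped ENNReal

/-- Extend a vector of spacings `z : Fin k → ℝ` to ℕ by zero. -/
noncomputable def zext {k : ℕ} (z : Fin k → ℝ) (l : ℕ) : ℝ :=
  if h : l < k then z ⟨l, h⟩ else 0

/-- V_p(z) = Σ_{1≤i<j≤k+1} v(z_i+⋯+z_{j−1}) + p Σ z_i (0-indexed form). -/
noncomputable def Vp {k : ℕ} (v : ℝ → EReal) (p : ℝ) (z : Fin k → ℝ) : ℝ :=
  (∑ i ∈ Finset.range k, ∑ j ∈ Finset.Icc (i + 1) k,
      (v (∑ l ∈ Finset.Ico i j, zext z l)).toReal)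
    + p * ∑ i ∈ Finset.range k, zext z i

/-- W(z;z') = Σ_{i=1}^k Σ_{j=1}^k v(z_i+⋯+z_k+z'_1+⋯+z'_j) (0-indexed form). -/
noncomputable def Wint {k : ℕ} (v : ℝ → EReal) (z z' : Fin k → ℝ) : ℝ :=
  ∑ i ∈ Finset.range k, ∑ j ∈ Finset.range k,
    (v ((∑ l ∈ Finset.Ico i k, zext z l) + ∑ l ∈ Finset.range (j + 1), zext z' l)).toReal

/-- Transfer kernel K(z,z') = exp(−β(½V_p(z) + W(z;z') + ½V_p(z'))). -/
noncomputable def Kgibbs {k : ℕ} (v : ℝ → EReal) (β p : ℝ) (z z' : Fin k → ℝ) : ℝ :=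
  Real.exp (-(β * ((1 / 2) * Vp v p z + Wint v z z' + (1 / 2) * Vp v p z')))

lemma sum_zext_rev {k : ℕ} (w : Fin k → ℝ) (a b : ℕ) (hb : b ≤ k) :
    ∑ l ∈ Finset.Ico a b, zext (fun i => w (Fin.rev i)) l
      = ∑ l ∈ Finset.Ico (k - b) (k - a), zext w l := by
  refine Finset.sum_nbij' (fun l => k - 1 - l) (fun l => k - 1 - l) ?_ ?_ ?_ ?_ ?_
  · intro l hl; simp only [Finset.mem_Ico] at *; omega
  · intro l hl; simp only [Finset.mem_Ico] at *; omega
  · intro l hl; simp only [Finset.mem_Ico] at hl; omega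
  · intro l hl; simp only [Finset.mem_Ico] at hl; omega
  · intro l hl
    simp only [Finset.mem_Ico] at hl
    have h1 : l < k := lt_of_lt_of_le hl.2 hb
    have h2 : k - 1 - l < k := by omega
    simp only [zext, dif_pos h1, dif_pos h2]
    congr 1
    ext
    simp only [Fin.val_rev]
    omega

lemma Vp_rev {k : ℕ} (v : ℝ → EReal) (p : ℝ) (z : Fin k → ℝ) :
    Vp v p (fun i => z (Fin.rev i)) = Vp v p z := by
  unfold Vp
  congr 1
  · rw [Finset.sum_sigma', Finset.sum_sigma']
    refine Finset.sum_nbij' (fun x => ⟨k - x.2, k - x.1⟩) (fun x => ⟨k - x.2, k - x.1⟩)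
      ?_ ?_ ?_ ?_ ?_
    · rintro ⟨a, b⟩ h
      dsimp only
      simp only [Finset.mem_sigma, Finset.mem_range, Finset.mem_Icc] at *
      omega
    · rintro ⟨a, b⟩ h
      dsimp only
      simp only [Finset.mem_sigma, Finset.mem_range, Finset.mem_Icc] at *
      omega
    · rintro ⟨a, b⟩ h
      dsimp only
      simp only [Finset.mem_sigma, Finset.mem_range, Finset.mem_Icc] at h
      rw [show k - (k - a) = a from by omega, show k - (k - b) = b from by omega]
    · rintro ⟨a, b⟩ h
      dsimp only
      simp only [Finset.mem_sigma, Finset.mem_range, Finset.mem_Icc] at h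
      rw [show k - (k - a) = a from by omega, show k - (k - b) = b from by omega]
    · rintro ⟨a, b⟩ h
      dsimp only
      simp only [Finset.mem_sigma, Finset.mem_range, Finset.mem_Icc] at h
      rw [sum_zext_rev z a b h.2.2]
  · congr 1
    have h := sum_zext_rev z 0 k le_rfl
    rw [Nat.sub_self, Nat.sub_zero, ← Finset.range_eq_Ico] at h
    exact h

lemma Wint_rev {k : ℕ} (v : ℝ → EReal) (z z' : Fin k → ℝ) :
    Wint v (fun i => z' (Fin.rev i)) (fun i => z (Fin.rev i)) = Wint v z z' := by
  unfold Wint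
  rw [← Finset.sum_product', ← Finset.sum_product']
  refine Finset.sum_nbij' (fun x => (k - 1 - x.2, k - 1 - x.1))
    (fun x => (k - 1 - x.2, k - 1 - x.1)) ?_ ?_ ?_ ?_ ?_
  · rintro ⟨a, b⟩ h
    dsimp only
    simp only [Finset.mem_product, Finset.mem_range] at *
    omega
  · rintro ⟨a, b⟩ h
    dsimp only
    simp only [Finset.mem_product, Finset.mem_range] at *
    omega
  · rintro ⟨a, b⟩ h
    dsimp only
    simp only [Finset.mem_product, Finset.mem_range] at h
    rw [Prod.mk.injEq]
    omega
  · rintro ⟨a, b⟩ h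
    dsimp only
    simp only [Finset.mem_product, Finset.mem_range] at h
    rw [Prod.mk.injEq]
    omega
  · rintro ⟨a, b⟩ h
    dsimp only
    simp only [Finset.mem_product, Finset.mem_range] at h
    have h1 : ∑ l ∈ Finset.Ico a k, zext (fun i => z' (Fin.rev i)) l
        = ∑ l ∈ Finset.range (k - 1 - a + 1), zext z' l := by
      rw [show k - 1 - a + 1 = k - a from by omega, sum_zext_rev z' a k le_rfl,
        Nat.sub_self, ← Finset.range_eq_Ico]
    have h2 : ∑ l ∈ Finset.range (b + 1), zext (fun i => z (Fin.rev i)) l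
        = ∑ l ∈ Finset.Ico (k - 1 - b) k, zext z l := by
      rw [Finset.range_eq_Ico, sum_zext_rev z 0 (b + 1) (by omega), Nat.sub_zero,
        show k - (b + 1) = k - 1 - b from by omega]
    rw [h1, h2, add_comm]

lemma sum_lb {ι : Type*} {s : Finset ι} {f : ι → ℝ} {M : ℝ} (hM : M ≤ 0)
    (h : ∀ i ∈ s, M ≤ f i) {n : ℕ} (hn : s.card ≤ n) :
    (n : ℝ) * M ≤ ∑ i ∈ s, f i := by
  have h1 : (s.card : ℝ) * M ≤ ∑ i ∈ s, f i := by
    have := Finset.card_nsmul_le_sum s f M h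
    simpa [nsmul_eq_mul] using this
  have h2 : (n : ℝ) * M ≤ (s.card : ℝ) * M :=
    mul_le_mul_of_nonpos_right (by exact_mod_cast hn) hM
  linarith

lemma toReal_lb (v : ℝ → EReal) (c₀ : ℝ) (hvlb : ∀ x, (c₀ : EReal) ≤ v x) (x : ℝ) :
    min c₀ 0 ≤ (v x).toReal := by
  by_cases h : v x = ⊤
  · simp [h]
  · refine le_trans (min_le_left _ _) ?_
    have := EReal.toReal_le_toReal (hvlb x) (by simp) h
    simpa using this

/-- The transfer kernel of a hard-core, finite pair potential is inversion symmetric,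
strictly positive on the hard-core box, and Hilbert–Schmidt on L²((r_hc,∞)^k). -/
theorem stmt8 {k : ℕ} (hk : 0 < k) (v : ℝ → EReal) (hv : Measurable v)
    (c₀ : ℝ) (hvlb : ∀ x, (c₀ : EReal) ≤ v x)
    (rhc : ℝ) (hrhc : 0 < rhc) (hvfin : ∀ x ∈ Set.Ioi rhc, v x ≠ ⊤ ∧ v x ≠ ⊥)
    (p β : ℝ) (hp : 0 < p) (hβ : 0 < β) :
    (∀ z z' : Fin k → ℝ, (∀ i, rhc < z i) → (∀ i, rhc < z' i) →
      Kgibbs v β p z z'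
        = Kgibbs v β p (fun i => z' (Fin.rev i)) (fun i => z (Fin.rev i))) ∧
    (∀ z z' : Fin k → ℝ, (∀ i, rhc < z i) → (∀ i, rhc < z' i) →
      0 < Kgibbs v β p z z') ∧
    (∫⁻ q : (Fin k → ℝ) × (Fin k → ℝ),
        ENNReal.ofReal ((Kgibbs v β p q.1 q.2) ^ 2)
        ∂(((volume : Measure (Fin k → ℝ)).restrict {z | ∀ i, rhc < z i}).prod
          ((volume : Measure (Fin k → ℝ)).restrict {z | ∀ i, rhc < z i})) < ⊤) := by
  refine ⟨?_, ?_, ?_⟩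
  · intro z z' _ _
    unfold Kgibbs
    rw [Vp_rev, Vp_rev, Wint_rev]
    ring_nf
  · intro z z' _ _
    exact Real.exp_pos _
  · -- Hilbert–Schmidt bound
    set M : ℝ := min c₀ 0 with hMdef
    have hM : M ≤ 0 := min_le_right _ _
    set A : ℝ := (k : ℝ) * ((k : ℝ) * M) with hAdef
    have hA : A ≤ 0 := by
      have hk0 : (0:ℝ) ≤ (k:ℝ) := Nat.cast_nonneg k
      have hkM : (k:ℝ) * M ≤ 0 := mul_nonpos_iff.2 (Or.inl ⟨hk0, hM⟩)
      exact mul_nonpos_iff.2 (Or.inl ⟨hk0, hkM⟩)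
    set S : (Fin k → ℝ) → ℝ := fun z => ∑ i ∈ Finset.range k, zext z i with hSdef
    have hVlb : ∀ z : Fin k → ℝ, A + p * S z ≤ Vp v p z := by
      intro z
      unfold Vp
      have hinner : ∀ i ∈ Finset.range k,
          (k : ℝ) * M ≤ ∑ j ∈ Finset.Icc (i + 1) k,
            (v (∑ l ∈ Finset.Ico i j, zext z l)).toReal := by
        intro i hi
        refine sum_lb hM (fun j _ => toReal_lb v c₀ hvlb _) ?_
        simp only [Nat.card_Icc]
        omega
      have houter : A ≤ ∑ i ∈ Finset.range k, ∑ j ∈ Finset.Icc (i + 1) k,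
          (v (∑ l ∈ Finset.Ico i j, zext z l)).toReal := by
        calc A = (k : ℝ) * ((k : ℝ) * M) := rfl
        _ ≤ ∑ i ∈ Finset.range k, ((k : ℝ) * M) := by
            rw [Finset.sum_const, Finset.card_range, nsmul_eq_mul]
        _ ≤ _ := Finset.sum_le_sum hinner
      linarith
    have hWlb : ∀ z z' : Fin k → ℝ, A ≤ Wint v z z' := by
      intro z z'
      unfold Wint
      have hinner : ∀ i ∈ Finset.range k, (k : ℝ) * M ≤ ∑ j ∈ Finset.range k,
          (v ((∑ l ∈ Finset.Ico i k, zext z l)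
            + ∑ l ∈ Finset.range (j + 1), zext z' l)).toReal := by
        intro i _
        exact sum_lb hM (fun j _ => toReal_lb v c₀ hvlb _) (by simp)
      calc A = (k : ℝ) * ((k : ℝ) * M) := rfl
      _ ≤ ∑ i ∈ Finset.range k, ((k : ℝ) * M) := by
          rw [Finset.sum_const, Finset.card_range, nsmul_eq_mul]
      _ ≤ _ := Finset.sum_le_sum hinner
    -- pointwise bound
    set C : ℝ≥0∞ := ENNReal.ofReal (Real.exp (-(4 * β * A))) with hCdef
    set F : (Fin k → ℝ) → ℝ≥0∞ :=
      fun z => ENNReal.ofReal (Real.exp (-(β * p) * S z)) with hFdef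
    have hptwise : ∀ z z' : Fin k → ℝ,
        ENNReal.ofReal ((Kgibbs v β p z z') ^ 2) ≤ C * (F z * F z') := by
      intro z z'
      have hE : 2 * A + (p / 2) * (S z + S z')
          ≤ (1 / 2) * Vp v p z + Wint v z z' + (1 / 2) * Vp v p z' := by
        have h1 := hVlb z
        have h2 := hVlb z'
        have h3 := hWlb z z'
        linarith
      have hK : Kgibbs v β p z z'
          ≤ Real.exp (-(β * (2 * A + (p / 2) * (S z + S z')))) := by
        unfold Kgibbs
        exact Real.exp_le_exp.2 (neg_le_neg (mul_le_mul_of_nonneg_left hE hβ.le))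
      have hK2 : (Kgibbs v β p z z') ^ 2
          ≤ Real.exp (-(4 * β * A)) * (Real.exp (-(β * p) * S z)
            * Real.exp (-(β * p) * S z')) := by
        have := pow_le_pow_left₀ (Real.exp_pos _).le hK 2
        refine this.trans_eq ?_
        rw [← Real.exp_add, ← Real.exp_add, sq, ← Real.exp_add]
        congr 1
        ring
      calc ENNReal.ofReal ((Kgibbs v β p z z') ^ 2)
          ≤ ENNReal.ofReal (Real.exp (-(4 * β * A)) * (Real.exp (-(β * p) * S z)
            * Real.exp (-(β * p) * S z'))) := ENNReal.ofReal_le_ofReal hK2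
        _ = C * (F z * F z') := by
            rw [ENNReal.ofReal_mul (Real.exp_nonneg _),
              ENNReal.ofReal_mul (Real.exp_nonneg _)]
    -- measurability of F
    have hSmeas : Measurable S := by
      apply Finset.measurable_sum
      intro i _
      by_cases h : i < k
      · simpa [zext, h] using measurable_pi_apply (⟨i, h⟩ : Fin k)
      · simp only [zext, dif_neg h]
        exact measurable_const
    have hFmeas : Measurable F :=
      ENNReal.measurable_ofReal.comp (Real.measurable_exp.comp (hSmeas.const_mul _))
    -- finiteness of ∫ F over the hard-core box
    set box : Set (Fin k → ℝ) := {z | ∀ i, rhc < z i} with hboxdef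
    have hboxeq : box = Set.pi Set.univ (fun _ : Fin k => Set.Ioi rhc) := by
      ext z; simp [hboxdef, Set.mem_pi]
    have hboxmeas : MeasurableSet box := by
      rw [hboxeq]
      exact MeasurableSet.univ_pi (fun _ => measurableSet_Ioi)
    set g : ℝ → ℝ := (Set.Ioi rhc).indicator (fun x => Real.exp (-(β * p) * x)) with hgdef
    have hgint : Integrable g := by
      refine IntegrableOn.integrable_indicator ?_ measurableSet_Ioi
      exact exp_neg_integrableOn_Ioi rhc (by positivity)
    have hprodint : Integrable (fun z : Fin k → ℝ => ∏ i : Fin k, g (z i)) :=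
      Integrable.fintype_prod (f := fun _ : Fin k => g) (fun _ => hgint)
    have hFfin : ∫⁻ z in box, F z ∂(volume : Measure (Fin k → ℝ)) < ⊤ := by
      have hle : ∀ z : Fin k → ℝ, box.indicator F z
          ≤ ENNReal.ofReal (∏ i : Fin k, g (z i)) := by
        intro z
        by_cases hz : z ∈ box
        · rw [Set.indicator_of_mem hz]
          have hzg : ∀ i : Fin k, g (z i) = Real.exp (-(β * p) * z i) := by
            intro i
            exact Set.indicator_of_mem (hz i) _
          have hsum : S z = ∑ i : Fin k, z i := by
            rw [hSdef]
            dsimp only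
            rw [← Fin.sum_univ_eq_sum_range (fun i => zext z i) k]
            refine Finset.sum_congr rfl (fun i _ => ?_)
            simp [zext, i.isLt]
          have : F z = ENNReal.ofReal (∏ i : Fin k, g (z i)) := by
            rw [hFdef]
            dsimp only
            congr 1
            rw [hsum, Finset.mul_sum, Real.exp_sum]
            exact Finset.prod_congr rfl (fun i _ => (hzg i).symm)
          exact this.le
        · rw [Set.indicator_of_notMem hz]
          exact zero_le'
      calc ∫⁻ z in box, F z ∂(volume : Measure (Fin k → ℝ))
          = ∫⁻ z, box.indicator F z ∂(volume : Measure (Fin k → ℝ)) :=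
            (lintegral_indicator hboxmeas F).symm
        _ ≤ ∫⁻ z, ENNReal.ofReal (∏ i : Fin k, g (z i)) ∂(volume : Measure (Fin k → ℝ)) :=
            lintegral_mono hle
        _ < ⊤ := hprodint.lintegral_lt_top
    -- put everything together
    calc ∫⁻ q : (Fin k → ℝ) × (Fin k → ℝ),
        ENNReal.ofReal ((Kgibbs v β p q.1 q.2) ^ 2)
        ∂(((volume : Measure (Fin k → ℝ)).restrict box).prod
          ((volume : Measure (Fin k → ℝ)).restrict box))
        ≤ ∫⁻ q : (Fin k → ℝ) × (Fin k → ℝ), C * (F q.1 * F q.2)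
          ∂(((volume : Measure (Fin k → ℝ)).restrict box).prod
            ((volume : Measure (Fin k → ℝ)).restrict box)) :=
          lintegral_mono (fun q => hptwise q.1 q.2)
      _ = C * ((∫⁻ z in box, F z ∂(volume : Measure (Fin k → ℝ)))
            * (∫⁻ z in box, F z ∂(volume : Measure (Fin k → ℝ)))) := by
          rw [lintegral_const_mul' _ _ ENNReal.ofReal_ne_top,
            lintegral_prod_mul hFmeas.aemeasurable hFmeas.aemeasurable]
      _ < ⊤ := ENNReal.mul_lt_top ENNReal.ofReal_lt_top
          (ENNReal.mul_lt_top hFfin hFfin)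
end
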